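/- Every subset A of any torsion-free abelian group G with 0 ∉ A, |A| ≤ 11, and ∑_{z∈A} z ≠ 0 admits an ordering of its elements whose partial sums are all nonzero and pairwise distinct. -/

import Mathlib

/-- An ordering of the finite set `A` (as a list) whose partial sums are all nonzero
and pairwise distinct. -/
def IsAlspachOrdering {G : Type*} [AddCommGroup G] (A : Finset G) (l : List G) : Prop :=
  l.Nodup ∧ (∀ x, x ∈ l ↔ x ∈ A) ∧
    (∀ i : ℕ, 1 ≤ i → i ≤ l.length → (l.take i).sum ≠ 0) ∧
    (∀ i j : ℕ, 1 ≤ i → i < j → j ≤ l.length → (l.take i).sum ≠ (l.take j).sum)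

section Helpers

variable {K : Type*} [AddCommGroup K] [LinearOrder K] [IsOrderedAddMonoid K]

lemma list_sum_of_finset {K : Type*} [AddCommMonoid K] [DecidableEq K]
    (s : Finset K) (l : List K) (hn : l.Nodup) (hm : ∀ x, x ∈ l ↔ x ∈ s) :
    l.sum = ∑ x ∈ s, x := by
  have hs : s = l.toFinset := by
    ext x; simp [hm, List.mem_toFinset]
  rw [hs]
  simpa using (List.sum_toFinset (id : K → K) hn).symm

lemma take_sum_le {l : List K} (hpos : ∀ x ∈ l, 0 < x) (j : ℕ) :
    (l.take j).sum ≤ l.sum := by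
  have h := List.sum_take_add_sum_drop l j
  have h0 : 0 ≤ (l.drop j).sum :=
    List.sum_nonneg (fun x hx => le_of_lt (hpos x (List.mem_of_mem_drop hx)))
  have : (l.take j).sum = l.sum - (l.drop j).sum := by rw [← h]; abel
  rw [this]
  exact sub_le_self _ h0

lemma drop_sum_le {l : List K} (hpos : ∀ x ∈ l, 0 < x) (j : ℕ) :
    (l.drop j).sum ≤ l.sum := by
  have h := List.sum_take_add_sum_drop l j
  have h0 : 0 ≤ (l.take j).sum :=
    List.sum_nonneg (fun x hx => le_of_lt (hpos x (List.mem_of_mem_take hx)))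
  have : (l.drop j).sum = l.sum - (l.take j).sum := by rw [← h]; abel
  rw [this]
  exact sub_le_self _ h0

/-- Key lemma: given finsets `P`, `M` of positive elements with different sums, we can
order them so that no nonempty suffix sum of `lP` equals a nonempty prefix sum of `lM`. -/
lemma suffix_prefix_lemma [DecidableEq K] :
    ∀ (n : ℕ) (P M : Finset K), P.card + M.card ≤ n →
    (∀ x ∈ P, 0 < x) → (∀ x ∈ M, 0 < x) → (∑ x ∈ P, x) ≠ (∑ x ∈ M, x) →
    ∃ lP lM : List K, lP.Nodup ∧ lM.Nodup ∧ (∀ x, x ∈ lP ↔ x ∈ P) ∧ (∀ x, x ∈ lM ↔ x ∈ M) ∧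
      (∀ i, i < lP.length → ∀ j, 1 ≤ j → j ≤ lM.length →
        (lP.drop i).sum ≠ (lM.take j).sum) := by
  intro n
  induction n with
  | zero =>
    intro P M hcard _ _ _
    have hP : P = ∅ := Finset.card_eq_zero.mp (by omega)
    have hM : M = ∅ := Finset.card_eq_zero.mp (by omega)
    exact ⟨[], [], List.nodup_nil, List.nodup_nil,
      by simp [hP], by simp [hM], by simp⟩
  | succ n IH =>
    intro P M hcard hP hM hne
    by_cases hPe : P = ∅
    · refine ⟨[], M.toList, List.nodup_nil, M.nodup_toList,
        by simp [hPe], by simp [Finset.mem_toList], by simp⟩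
    by_cases hMe : M = ∅
    · refine ⟨P.toList, [], P.nodup_toList, List.nodup_nil,
        by simp [Finset.mem_toList], by simp [hMe], ?_⟩
      intro i _ j hj1 hj2
      simp at hj2; omega
    have hPne : P.Nonempty := Finset.nonempty_of_ne_empty hPe
    have hMne : M.Nonempty := Finset.nonempty_of_ne_empty hMe
    have hPpos : 0 < ∑ x ∈ P, x := Finset.sum_pos hP hPne
    have hMpos : 0 < ∑ x ∈ M, x := Finset.sum_pos hM hMne
    rcases hne.lt_or_gt with hlt | hlt
    · -- ∑ P < ∑ M : step down M
      have hex : ∃ e ∈ M, e ≠ ∑ x ∈ M, x - ∑ x ∈ P, x := by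
        by_contra hco
        push_neg at hco
        set v := ∑ x ∈ M, x - ∑ x ∈ P, x with hv
        have hsing : M = {v} :=
          Finset.eq_singleton_iff_nonempty_unique_mem.mpr ⟨hMne, hco⟩
        have h1 : ∑ x ∈ M, x = v := by rw [hsing, Finset.sum_singleton]
        exact hPpos.ne' (sub_eq_self.mp h1.symm)
      obtain ⟨e, heM, hene⟩ := hex
      set M' := M.erase e with hM'
      have hsum' : (∑ x ∈ M', x) + e = ∑ x ∈ M, x := Finset.sum_erase_add M _ heM
      have hcard' : P.card + M'.card ≤ n := by
        have hce : M'.card = M.card - 1 := by rw [hM']; exact Finset.card_erase_of_mem heM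
        have hc1 : 1 ≤ M.card := Finset.card_pos.mpr hMne
        omega
      have hne' : (∑ x ∈ P, x) ≠ ∑ x ∈ M', x := by
        intro h; apply hene; rw [← hsum', ← h]; abel
      obtain ⟨lP, lM', hn1, hn2, hm1, hm2, hkey⟩ :=
        IH P M' hcard' hP (fun x hx => hM x (Finset.mem_of_mem_erase hx)) hne'
      refine ⟨lP, lM' ++ [e], hn1, ?_, hm1, ?_, ?_⟩
      · refine List.Nodup.append hn2 (List.nodup_singleton e) ?_
        intro x hx hx'
        simp only [List.mem_singleton] at hx'
        subst hx'
        exact (Finset.notMem_erase x M) ((hm2 x).mp hx)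
      · intro x
        simp only [List.mem_append, hm2, List.mem_singleton, hM', Finset.mem_erase]
        constructor
        · rintro (⟨_, h⟩ | rfl) <;> [exact h; exact heM]
        · intro hx
          by_cases hxe : x = e
          · exact Or.inr hxe
          · exact Or.inl ⟨hxe, hx⟩
      · intro i hi j hj1 hj2
        by_cases hj : j ≤ lM'.length
        · rw [List.take_append_of_le_length hj]
          exact hkey i hi j hj1 hj
        · have hlen : (lM' ++ [e]).length = lM'.length + 1 := by simp
          have hjeq : j = lM'.length + 1 := by rw [hlen] at hj2; omega
          have htake : ((lM' ++ [e]).take j).sum = ∑ x ∈ M, x := by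
            rw [hjeq, ← hlen, List.take_length]
            rw [List.sum_append, List.sum_singleton,
              list_sum_of_finset M' lM' hn2 hm2, hsum']
          rw [htake]
          have hle : (lP.drop i).sum ≤ ∑ x ∈ P, x := by
            rw [← list_sum_of_finset P lP hn1 hm1]
            exact drop_sum_le (fun x hx => hP x ((hm1 x).mp hx)) i
          exact ne_of_lt (lt_of_le_of_lt hle hlt)
    · -- ∑ M < ∑ P : step down P
      have hex : ∃ e ∈ P, e ≠ ∑ x ∈ P, x - ∑ x ∈ M, x := by
        by_contra hco
        push_neg at hco
        set v := ∑ x ∈ P, x - ∑ x ∈ M, x with hv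
        have hsing : P = {v} :=
          Finset.eq_singleton_iff_nonempty_unique_mem.mpr ⟨hPne, hco⟩
        have h1 : ∑ x ∈ P, x = v := by rw [hsing, Finset.sum_singleton]
        exact hMpos.ne' (sub_eq_self.mp h1.symm)
      obtain ⟨e, heP, hene⟩ := hex
      set P' := P.erase e with hP'
      have hsum' : (∑ x ∈ P', x) + e = ∑ x ∈ P, x := Finset.sum_erase_add P _ heP
      have hcard' : P'.card + M.card ≤ n := by
        have hce : P'.card = P.card - 1 := by rw [hP']; exact Finset.card_erase_of_mem heP
        have hc1 : 1 ≤ P.card := Finset.card_pos.mpr hPne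
        omega
      have hne' : (∑ x ∈ P', x) ≠ ∑ x ∈ M, x := by
        intro h; apply hene; rw [← hsum', h]; abel
      obtain ⟨lP', lM, hn1, hn2, hm1, hm2, hkey⟩ :=
        IH P' M hcard' (fun x hx => hP x (Finset.mem_of_mem_erase hx)) hM hne'
      refine ⟨e :: lP', lM, ?_, hn2, ?_, hm2, ?_⟩
      · refine List.nodup_cons.mpr ⟨?_, hn1⟩
        intro hmem
        exact (Finset.notMem_erase e P) ((hm1 e).mp hmem)
      · intro x
        simp only [List.mem_cons, hm1, hP', Finset.mem_erase]
        constructor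
        · rintro (rfl | ⟨_, h⟩) <;> [exact heP; exact h]
        · intro hx
          by_cases hxe : x = e
          · exact Or.inl hxe
          · exact Or.inr ⟨hxe, hx⟩
      · intro i hi j hj1 hj2
        cases i with
        | zero =>
          have hdrop : ((e :: lP').drop 0).sum = ∑ x ∈ P, x := by
            simp only [List.drop_zero, List.sum_cons]
            rw [list_sum_of_finset P' lP' hn1 hm1, ← hsum']
            abel
          rw [hdrop]
          have hle : (lM.take j).sum ≤ ∑ x ∈ M, x := by
            rw [← list_sum_of_finset M lM hn2 hm2]
            exact take_sum_le (fun x hx => hM x ((hm2 x).mp hx)) j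
          exact fun h => absurd h.symm (ne_of_lt (lt_of_le_of_lt hle hlt))
        | succ i =>
          rw [List.drop_succ_cons]
          exact hkey i (by simpa using hi) j hj1 hj2

end Helpers

section Assembly

variable {K : Type*} [AddCommGroup K] [LinearOrder K] [IsOrderedAddMonoid K]

lemma sum_map_neg {K : Type*} [AddCommGroup K] (l : List K) :
    (l.map (fun x => -x)).sum = -l.sum := by
  induction l with
  | nil => simp
  | cons a t ih => simp [ih]; abel

lemma alspach_pos [DecidableEq K] (A : Finset K) (h0 : (0 : K) ∉ A)
    (hs : 0 < ∑ x ∈ A, x) : ∃ l : List K, IsAlspachOrdering A l := by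
  classical
  set P := A.filter (fun x => 0 < x) with hPdef
  set N := A.filter (fun x => x < 0) with hNdef
  set M := N.image (fun x => -x) with hMdef
  have hPpos : ∀ x ∈ P, 0 < x := fun x hx => (Finset.mem_filter.mp hx).2
  have hNneg : ∀ x ∈ N, x < 0 := fun x hx => (Finset.mem_filter.mp hx).2
  have hMpos : ∀ x ∈ M, 0 < x := by
    intro x hx
    rw [hMdef] at hx
    obtain ⟨y, hy, rfl⟩ := Finset.mem_image.mp hx
    exact neg_pos.mpr (hNneg y hy)
  have hNalt : A.filter (fun x => ¬ 0 < x) = N := by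
    rw [hNdef]
    apply Finset.filter_congr
    intro x hx
    simp only [not_lt, eq_iff_iff]
    exact ⟨fun h => lt_of_le_of_ne h (fun he => h0 (he ▸ hx)), le_of_lt⟩
  have hsplit : (∑ x ∈ P, x) + (∑ x ∈ N, x) = ∑ x ∈ A, x := by
    rw [hPdef, ← hNalt]
    exact Finset.sum_filter_add_sum_filter_not A _ _
  have hMsum : (∑ x ∈ M, x) = -∑ x ∈ N, x := by
    rw [hMdef, Finset.sum_image (by intro a _ b _ h; exact neg_injective h)]
    exact Finset.sum_neg_distrib (f := fun x => x)
  have hdiff : (∑ x ∈ P, x) - (∑ x ∈ M, x) = ∑ x ∈ A, x := by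
    rw [hMsum, sub_neg_eq_add, hsplit]
  have hne : (∑ x ∈ P, x) ≠ ∑ x ∈ M, x := by
    intro h
    rw [h, sub_self] at hdiff
    exact hs.ne hdiff
  obtain ⟨lP, lM, hn1, hn2, hm1, hm2, hkey⟩ :=
    suffix_prefix_lemma (P.card + M.card) P M le_rfl hPpos hMpos hne
  have hlPpos : ∀ x ∈ lP, 0 < x := fun x hx => hPpos x ((hm1 x).mp hx)
  have hlMpos : ∀ x ∈ lM, 0 < x := fun x hx => hMpos x ((hm2 x).mp hx)
  have hlPsum : lP.sum = ∑ x ∈ P, x := list_sum_of_finset P lP hn1 hm1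
  have hlMsum : lM.sum = ∑ x ∈ M, x := list_sum_of_finset M lM hn2 hm2
  set r := lP.length with hr
  set m := lM.length with hm
  set l := lP ++ lM.map (fun x => -x) with hldef
  have hlen : l.length = r + m := by simp [hldef, hr, hm]
  have hS1 : ∀ i, i ≤ r → (l.take i).sum = (lP.take i).sum := by
    intro i hi
    rw [hldef, List.take_append_of_le_length hi]
  have hS2 : ∀ u : ℕ, (l.take (r + u)).sum = lP.sum - (lM.take u).sum := by
    intro u
    rw [hldef, List.take_length_add_append, List.sum_append, ← List.map_take, sum_map_neg,
      sub_eq_add_neg]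
  have hposall : ∀ i, 1 ≤ i → i ≤ r + m → 0 < (l.take i).sum := by
    intro i h1 h2
    by_cases hi : i ≤ r
    · rw [hS1 i hi]
      apply List.sum_pos
      · exact fun x hx => hlPpos x (List.mem_of_mem_take hx)
      · intro hnil
        have := congrArg List.length hnil
        simp only [List.length_take, List.length_nil] at this
        omega
    · push_neg at hi
      have hieq : i = r + (i - r) := by omega
      rw [hieq, hS2]
      have hle : (lM.take (i - r)).sum ≤ lM.sum := take_sum_le hlMpos _
      have h3 : lP.sum - lM.sum ≤ lP.sum - (lM.take (i - r)).sum := sub_le_sub_left hle _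
      have heq : lP.sum - lM.sum = ∑ x ∈ A, x := by rw [hlPsum, hlMsum]; exact hdiff
      calc (0 : K) < ∑ x ∈ A, x := hs
        _ = lP.sum - lM.sum := heq.symm
        _ ≤ _ := h3
  have hmono : ∀ (L : List K), (∀ x ∈ L, 0 < x) → ∀ i j, i < j → j ≤ L.length →
      (L.take i).sum < (L.take j).sum := by
    intro L hLpos i j hij hjle
    have hsplit' : L.take j = (L.take j).take i ++ (L.take j).drop i :=
      (List.take_append_drop i (L.take j)).symm
    have htt : (L.take j).take i = L.take i := by
      rw [List.take_take]
      congr 1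
      omega
    have hslice : 0 < ((L.take j).drop i).sum := by
      apply List.sum_pos
      · exact fun x hx => hLpos x (List.mem_of_mem_take (List.mem_of_mem_drop hx))
      · intro hnil
        have := congrArg List.length hnil
        simp only [List.length_drop, List.length_take, List.length_nil] at this
        omega
    have hsum2 : (L.take j).sum = (L.take i).sum + ((L.take j).drop i).sum := by
      conv_lhs => rw [hsplit']
      rw [List.sum_append, htt]
    rw [hsum2]
    exact lt_add_of_pos_right _ hslice
  refine ⟨l, ?_, ?_, ?_, ?_⟩
  · -- Nodup
    rw [hldef]
    refine List.Nodup.append hn1 (List.Nodup.map (fun a b h => neg_injective h) hn2) ?_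
    intro x hx hx'
    obtain ⟨y, hy, rfl⟩ := List.mem_map.mp hx'
    exact lt_asymm (hlMpos y hy) (neg_pos.mp (hlPpos _ hx))
  · -- membership
    intro x
    rw [hldef]
    simp only [List.mem_append, List.mem_map, hm1, hm2]
    constructor
    · rintro (hx | ⟨y, hy, rfl⟩)
      · exact Finset.mem_of_mem_filter x hx
      · rw [hMdef] at hy
        obtain ⟨z, hz, rfl⟩ := Finset.mem_image.mp hy
        rw [neg_neg]
        exact Finset.mem_of_mem_filter z hz
    · intro hx
      have hx0 : x ≠ 0 := fun h => h0 (h ▸ hx)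
      rcases hx0.lt_or_gt with hneg | hpos
      · refine Or.inr ⟨-x, ?_, neg_neg x⟩
        rw [hMdef]
        exact Finset.mem_image.mpr ⟨x, Finset.mem_filter.mpr ⟨hx, hneg⟩, rfl⟩
      · exact Or.inl (Finset.mem_filter.mpr ⟨hx, hpos⟩)
  · -- nonzero
    intro i h1 h2
    rw [hlen] at h2
    exact (hposall i h1 h2).ne'
  · -- distinct
    intro i j h1 hij hj
    rw [hlen] at hj
    by_cases hjr : j ≤ r
    · rw [hS1 i (le_of_lt (lt_of_lt_of_le hij hjr)), hS1 j hjr]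
      exact (hmono lP hlPpos i j hij hjr).ne
    · push_neg at hjr
      have hjeq : j = r + (j - r) := by omega
      by_cases hir : r ≤ i
      · have hieq : i = r + (i - r) := by omega
        rw [hjeq, hieq, hS2, hS2]
        have hlt2 : (lM.take (i - r)).sum < (lM.take (j - r)).sum := by
          apply hmono lM hlMpos
          · omega
          · omega
        intro hcon
        rw [sub_right_inj] at hcon
        exact hlt2.ne hcon
      · push_neg at hir
        rw [hjeq, hS2, hS1 i (le_of_lt hir)]
        have htd : (lP.take i).sum = lP.sum - (lP.drop i).sum := by
          have h5 := List.sum_take_add_sum_drop lP i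
          rw [← h5]
          abel
        rw [htd]
        intro hcon
        rw [sub_right_inj] at hcon
        exact hkey i hir (j - r) (by omega) (by omega) hcon

end Assembly

section Transfer

lemma IsAlspachOrdering.map_addHom {G H : Type*} [AddCommGroup G] [AddCommGroup H]
    [DecidableEq H] (f : G →+ H) (hf : Function.Injective f)
    {A : Finset G} {l : List G} (h : IsAlspachOrdering A l) :
    IsAlspachOrdering (A.image f) (l.map f) := by
  obtain ⟨hn, hmem, h1, h2⟩ := h
  refine ⟨List.Nodup.map hf hn, ?_, ?_, ?_⟩
  · intro x
    simp only [List.mem_map, Finset.mem_image, hmem]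
  · intro i hi1 hi2
    rw [List.length_map] at hi2
    rw [← List.map_take, ← map_list_sum]
    intro hcon
    exact h1 i hi1 hi2 (hf (by rw [hcon, map_zero]))
  · intro i j hi1 hij hj
    rw [List.length_map] at hj
    rw [← List.map_take, ← List.map_take, ← map_list_sum, ← map_list_sum]
    intro hcon
    exact h2 i j hi1 hij hj (hf hcon)

/-- The main combinatorial theorem in any linearly ordered abelian group. -/
theorem alspach_of_linearOrdered {K : Type*} [AddCommGroup K] [LinearOrder K] [IsOrderedAddMonoid K] [DecidableEq K]
    (A : Finset K) (h0 : (0 : K) ∉ A) (hs : (∑ x ∈ A, x) ≠ 0) :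
    ∃ l : List K, IsAlspachOrdering A l := by
  rcases hs.lt_or_gt with h | h
  · -- sum < 0 : negate
    have hinj : Function.Injective (⇑(negAddMonoidHom (α := K))) := fun a b hab =>
      neg_injective hab
    have h0' : (0 : K) ∉ A.image (⇑(negAddMonoidHom (α := K))) := by
      intro hmem
      obtain ⟨a, ha, hae⟩ := Finset.mem_image.mp hmem
      have ha0 : a = 0 := by
        have h5 : -a = (0 : K) := hae
        simpa using h5
      exact h0 (ha0 ▸ ha)
    have hsum' : 0 < ∑ x ∈ A.image (⇑(negAddMonoidHom (α := K))), x := by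
      rw [Finset.sum_image (fun a _ b _ hab => hinj hab)]
      have h5 : ∑ x ∈ A, (negAddMonoidHom (α := K)) x = -∑ x ∈ A, x := by
        rw [← map_sum]
        rfl
      rw [h5]
      exact neg_pos.mpr h
    obtain ⟨l, hl⟩ := alspach_pos _ h0' hsum'
    refine ⟨l.map (⇑(negAddMonoidHom (α := K))), ?_⟩
    have := hl.map_addHom (negAddMonoidHom (α := K)) hinj
    rwa [Finset.image_image, show (⇑(negAddMonoidHom (α := K)) ∘ ⇑(negAddMonoidHom (α := K))) = id by
      funext x; exact neg_neg x, Finset.image_id] at this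
  · exact alspach_pos A h0 h

end Transfer

theorem stmt5 (G : Type*) [AddCommGroup G]
    (htf : ∀ (n : ℕ) (g : G), 0 < n → n • g = 0 → g = 0) :
    ∀ A : Finset G, (0 : G) ∉ A → A.card ≤ 11 → ∑ z ∈ A, z ≠ 0 →
      ∃ l : List G, IsAlspachOrdering A l := by
  classical
  intro A h0 _ hsum
  -- the subgroup generated by A, as a ℤ-submodule
  set Hm : Submodule ℤ G := Submodule.span ℤ (A : Set G) with hHm
  haveI : Module.Finite ℤ Hm := Module.Finite.span_of_finite ℤ A.finite_toSet
  haveI : NoZeroSMulDivisors ℤ Hm := by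
    refine ⟨fun {c} {x} hcx => ?_⟩
    by_cases hc : c = 0
    · exact Or.inl hc
    · refine Or.inr ?_
      have hG : c • (x : G) = 0 := by
        have h' := congrArg (Subtype.val) hcx
        simpa using h'
      have hnat : ((c.natAbs : ℤ)) • (x : G) = 0 := by
        rcases Int.natAbs_eq c with he | he
        · rw [← he]; exact hG
        · have : ((c.natAbs : ℤ)) = -c := by omega
          rw [this, neg_smul, hG, neg_zero]
      have hxg : (x : G) = 0 := by
        apply htf c.natAbs (x : G) (Int.natAbs_pos.mpr hc)
        rw [← natCast_zsmul]
        exact hnat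
      exact Subtype.ext (by simpa using hxg)
  haveI : Module.Free ℤ Hm := Module.free_of_finite_type_torsion_free'
  -- a basis indexed by `Fin nb`
  set ι := Module.Free.ChooseBasisIndex ℤ Hm with hι
  set b0 : Module.Basis ι ℤ Hm := Module.Free.chooseBasis ℤ Hm with hb0
  set nb := Fintype.card ι with hnb
  set b : Module.Basis (Fin nb) ℤ Hm := b0.reindex (Fintype.equivFin ι) with hb
  -- the target linearly ordered group
  let KK := Lex (Fin nb →₀ ℤ)
  let e1 : Hm ≃+ (Fin nb →₀ ℤ) := b.repr.toAddEquiv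
  let e2 : (Fin nb →₀ ℤ) ≃+ KK :=
    { toLex (α := Fin nb →₀ ℤ) with map_add' := fun _ _ => rfl }
  let f : Hm ≃+ KK := e1.trans e2
  -- lift A into Hm
  have hmemHm : ∀ a ∈ A, a ∈ Hm := by
    intro a ha
    rw [hHm]
    exact Submodule.subset_span (Finset.mem_coe.mpr ha)
  set A' : Finset Hm := A.attach.image (fun a => (⟨a.1, hmemHm a.1 a.2⟩ : Hm)) with hA'
  have hval : A'.image (⇑(Hm.subtype.toAddMonoidHom)) = A := by
    ext x
    constructor
    · intro hx
      obtain ⟨y, hy, rfl⟩ := Finset.mem_image.mp hx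
      rw [hA'] at hy
      obtain ⟨a, -, rfl⟩ := Finset.mem_image.mp hy
      exact a.2
    · intro hx
      refine Finset.mem_image.mpr ⟨⟨x, hmemHm x hx⟩, ?_, rfl⟩
      rw [hA']
      exact Finset.mem_image.mpr ⟨⟨x, hx⟩, Finset.mem_attach _ _, rfl⟩
  have hvalinj : Function.Injective (⇑(Hm.subtype.toAddMonoidHom)) := Subtype.val_injective
  -- the image of A' in KK
  set B : Finset KK := A'.image (⇑(f.toAddMonoidHom)) with hB
  have hfinj : Function.Injective (⇑(f.toAddMonoidHom)) := f.injective
  have hfsyminj : Function.Injective (⇑(f.symm.toAddMonoidHom)) := f.symm.injective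
  have hA'sum : (∑ x ∈ A', x) ≠ 0 := by
    intro hcon
    apply hsum
    have : ∑ x ∈ A'.image (⇑(Hm.subtype.toAddMonoidHom)), x
        = (Hm.subtype.toAddMonoidHom) (∑ x ∈ A', x) := by
      rw [Finset.sum_image (fun a _ b _ hab => hvalinj hab), map_sum]
    rw [hval] at this
    rw [this, hcon, map_zero]
  have hB0 : (0 : KK) ∉ B := by
    intro hmem
    obtain ⟨a, ha, hae⟩ := Finset.mem_image.mp hmem
    have ha0 : a = 0 := hfinj (by rw [hae]; exact (map_zero _).symm)
    subst ha0
    apply h0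
    have : ((0 : Hm) : G) ∈ A := by
      have := hval ▸ (Finset.mem_image.mpr ⟨0, ha, rfl⟩)
      simpa using this
    simpa using this
  have hBsum : (∑ x ∈ B, x) ≠ 0 := by
    rw [hB, Finset.sum_image (fun a _ b _ hab => hfinj hab), ← map_sum]
    intro hcon
    exact hA'sum (hfinj (by rw [hcon, map_zero]))
  obtain ⟨lB, hlB⟩ := alspach_of_linearOrdered B hB0 hBsum
  -- transfer back to Hm
  have h1 := hlB.map_addHom f.symm.toAddMonoidHom hfsyminj
  have hBA' : B.image (⇑(f.symm.toAddMonoidHom)) = A' := by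
    rw [hB, Finset.image_image]
    have : (⇑(f.symm.toAddMonoidHom) ∘ ⇑(f.toAddMonoidHom)) = id := by
      funext x; simp
    rw [this, Finset.image_id]
  rw [hBA'] at h1
  -- transfer back to G
  have h2 := h1.map_addHom Hm.subtype.toAddMonoidHom hvalinj
  rw [hval] at h2
  exact ⟨_, h2⟩
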